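/- Let q be an odd prime power, m₁ ≠ n₁ (with 1 ≤ m₁, n₁ ≤ q−1), and let φ : D(q; m₁, n₁) → D(q; m₂, n₂) be a digraph isomorphism written componentwise as φ(x, y) = (f(x, y), g(x, y)). Then f(x, y) = 0 if and only if x = 0. -/

import Mathlib

/-- The arc relation of the monomial digraph `D(q; m, n)`. -/
def monArc {F : Type*} [Field F] (m n : ℕ) (u v : F × F) : Prop :=
  u.2 + v.2 = u.1 ^ m * v.1 ^ n

open Finset

section Aux
variable {F : Type*} [Field F] [Fintype F]

open Classical in
noncomputable def mutCard (m n : ℕ) (u : F × F) : ℕ :=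
  (univ.filter fun v => monArc m n u v ∧ monArc m n v u).card

open Classical

lemma graph_card (h : F → F) :
    (univ.filter fun v : F × F => v.2 = h v.1).card = Fintype.card F := by
  have e : (univ.filter fun v : F × F => v.2 = h v.1)
      = univ.image (fun t : F => (t, h t)) := by
    ext v
    simp only [mem_filter, mem_univ, true_and, mem_image]
    constructor
    · intro hv; exact ⟨v.1, (Prod.ext rfl hv.symm)⟩
    · rintro ⟨t, rfl⟩; rfl
  rw [e, card_image_of_injective _ (fun a b hab => (Prod.mk.injEq _ _ _ _).mp hab |>.1)]
  simp

lemma mutCard_zero (m n : ℕ) (hm : m ≠ 0) (hn : n ≠ 0) (a : F) :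
    mutCard m n ((0 : F), a) = Fintype.card F := by
  unfold mutCard
  have e : (univ.filter fun v : F × F => monArc m n ((0:F), a) v ∧ monArc m n v ((0:F), a))
      = univ.filter fun v : F × F => v.2 = (fun _ : F => -a) v.1 := by
    ext v
    simp only [monArc, mem_filter, mem_univ, true_and, zero_pow hm, zero_pow hn,
      zero_mul, mul_zero]
    constructor
    · rintro ⟨h1, _⟩; exact eq_neg_of_add_eq_zero_right h1
    · intro h; rw [h]; constructor <;> ring
  rw [e]; exact graph_card (fun _ : F => -a)

lemma mutCard_diag (m : ℕ) (w : F × F) :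
    mutCard m m w = Fintype.card F := by
  unfold mutCard
  have e : (univ.filter fun v : F × F => monArc m m w v ∧ monArc m m v w)
      = univ.filter fun v : F × F => v.2 = (fun t : F => w.1 ^ m * t ^ m - w.2) v.1 := by
    ext v
    simp only [mem_filter, mem_univ, true_and]; simp only [monArc]
    constructor
    · rintro ⟨h1, _⟩; show v.2 = w.1 ^ m * v.1 ^ m - w.2; linear_combination h1
    · intro h
      have h' : v.2 = w.1 ^ m * v.1 ^ m - w.2 := h
      rw [h']; constructor <;> ring
  rw [e]; exact graph_card (fun t : F => w.1 ^ m * t ^ m - w.2)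

lemma mutCard_comm (m n : ℕ) (u : F × F) :
    mutCard m n u = mutCard n m u := by
  unfold mutCard
  congr 1
  apply Finset.filter_congr
  intro v _
  have h1 : monArc m n u v ↔ monArc n m v u := by
    unfold monArc; rw [add_comm, mul_comm]
  have h2 : monArc m n v u ↔ monArc n m u v := by
    unfold monArc; rw [add_comm, mul_comm]
  rw [h1, h2, and_comm]

lemma mutCard_lt (m n : ℕ) (hn : 1 ≤ n) (hlt : n < m) (hm : m ≤ Fintype.card F - 1)
    (x y : F) (hx : x ≠ 0) :
    mutCard m n (x, y) ≤ Fintype.card F - 1 := by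
  unfold mutCard
  set S := univ.filter fun v : F × F => monArc m n ((x:F), y) v ∧ monArc m n v (x, y) with hS
  obtain ⟨d, rfl⟩ : ∃ d, m = n + (d + 1) := ⟨m - n - 1, by omega⟩
  have hinj : Set.InjOn Prod.fst (S : Set (F × F)) := by
    intro v hv w hw hvw
    simp only [hS, coe_filter, Set.mem_setOf_eq, mem_univ, true_and] at hv hw; simp only [monArc] at hv hw
    have h1 := hv.1
    have h2 := hw.1
    refine Prod.ext hvw ?_
    have : y + v.2 = y + w.2 := by rw [h1, h2, hvw]
    exact add_left_cancel this
  have hcard : S.card = (S.image Prod.fst).card := (Finset.card_image_of_injOn hinj).symm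
  rw [hcard]
  have hsub : S.image Prod.fst ⊆
      insert (0 : F) (Polynomial.nthRoots (d + 1) (x ^ (d + 1))).toFinset := by
    intro t ht
    simp only [mem_image] at ht
    obtain ⟨v, hv, rfl⟩ := ht
    simp only [hS, mem_filter] at hv; simp only [monArc] at hv
    have h1 := hv.2.1
    have h2 := hv.2.2
    by_cases ht0 : v.1 = 0
    · rw [ht0]; exact Finset.mem_insert_self 0 _
    · apply Finset.mem_insert_of_mem
      rw [Multiset.mem_toFinset, Polynomial.mem_nthRoots (by omega)]
      -- from h1, h2 : x^m v.1^n = v.1^m x^n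
      have key : x ^ (n + (d+1)) * v.1 ^ n = v.1 ^ (n + (d+1)) * x ^ n := by
        have : y + v.2 = v.2 + y := add_comm _ _
        rw [h1, h2] at this
        exact this
      have hxn : x ^ n ≠ 0 := pow_ne_zero _ hx
      have htn : v.1 ^ n ≠ 0 := pow_ne_zero _ ht0
      have := mul_right_cancel₀ (mul_ne_zero hxn htn)
        (show v.1 ^ (d+1) * (x ^ n * v.1 ^ n) = x ^ (d+1) * (x ^ n * v.1 ^ n) by
          linear_combination -key)
      exact this
  have hle := Finset.card_le_card hsub
  have hroots : (Polynomial.nthRoots (d + 1) (x ^ (d + 1)) : Multiset F).toFinset.card ≤ d + 1 := by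
    refine le_trans (Multiset.toFinset_card_le _) ?_
    simpa using Polynomial.card_nthRoots (d + 1) (x ^ (d + 1))
  have := Finset.card_insert_le (0 : F) (Polynomial.nthRoots (d + 1) (x ^ (d + 1))).toFinset
  omega

lemma mutCard_ne (m n : ℕ) (hm : 1 ≤ m ∧ m ≤ Fintype.card F - 1)
    (hn : 1 ≤ n ∧ n ≤ Fintype.card F - 1) (hne : m ≠ n)
    (x y : F) (hx : x ≠ 0) :
    mutCard m n (x, y) ≤ Fintype.card F - 1 := by
  rcases lt_or_gt_of_ne hne with h | h
  · rw [mutCard_comm]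
    exact mutCard_lt n m hm.1 h hn.2 x y hx
  · exact mutCard_lt m n hn.1 h hm.2 x y hx

lemma mutCard_map (m₁ n₁ m₂ n₂ : ℕ) (φ : (F × F) ≃ (F × F))
    (hiso : ∀ u v, monArc m₁ n₁ u v ↔ monArc m₂ n₂ (φ u) (φ v)) (u : F × F) :
    mutCard m₁ n₁ u = mutCard m₂ n₂ (φ u) := by
  unfold mutCard
  apply Finset.card_bij (fun v _ => φ v)
  · intro v hv
    simp only [mem_filter, mem_univ, true_and] at hv ⊢
    exact ⟨(hiso u v).mp hv.1, (hiso v u).mp hv.2⟩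
  · intro a _ b _ h; exact φ.injective h
  · intro w hw
    refine ⟨φ.symm w, ?_, φ.apply_symm_apply w⟩
    simp only [mem_filter, mem_univ, true_and] at hw ⊢
    constructor
    · exact (hiso u (φ.symm w)).mpr (by simpa using hw.1)
    · exact (hiso (φ.symm w) u).mpr (by simpa using hw.2)

lemma mutCard_eq_card_iff (m n : ℕ) (hm : 1 ≤ m ∧ m ≤ Fintype.card F - 1)
    (hn : 1 ≤ n ∧ n ≤ Fintype.card F - 1) (hne : m ≠ n) (u : F × F) :
    mutCard m n u = Fintype.card F ↔ u.1 = 0 := by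
  have hq2 : 1 ≤ Fintype.card F := Fintype.card_pos
  constructor
  · intro h
    by_contra hx
    have := mutCard_ne m n hm hn hne u.1 u.2 hx
    rw [show ((u.1 : F), u.2) = u from rfl, h] at this
    omega
  · intro h
    have : u = ((0:F), u.2) := Prod.ext h rfl
    rw [this]
    exact mutCard_zero m n (by omega) (by omega) u.2

end Aux

/-- If `q` is odd, `m₁ ≠ n₁`, and `φ = (f, g)` is an isomorphism from
`D(q; m₁,n₁)` to `D(q; m₂,n₂)`, then `f(x,y) = 0` iff `x = 0`. -/
theorem stmt_11 {F : Type*} [Field F] [Fintype F] (q : ℕ) (hq : Fintype.card F = q)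
    (hodd : Odd q) (m₁ n₁ m₂ n₂ : ℕ) (hne : m₁ ≠ n₁)
    (hm₁ : 1 ≤ m₁ ∧ m₁ ≤ q - 1) (hn₁ : 1 ≤ n₁ ∧ n₁ ≤ q - 1)
    (hm₂ : 1 ≤ m₂ ∧ m₂ ≤ q - 1) (hn₂ : 1 ≤ n₂ ∧ n₂ ≤ q - 1)
    (φ : (F × F) ≃ (F × F))
    (hiso : ∀ u v : F × F, monArc m₁ n₁ u v ↔ monArc m₂ n₂ (φ u) (φ v))
    (f g : F × F → F) (hφ : ∀ p : F × F, φ p = (f p, g p)) :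
    ∀ x y : F, f (x, y) = 0 ↔ x = 0 := by
  subst hq
  have hq2 : 2 ≤ Fintype.card F := Fintype.one_lt_card
  -- rule out m₂ = n₂
  have hm2n2 : m₂ ≠ n₂ := by
    intro h
    subst h
    have h1 : mutCard m₁ n₁ ((1:F), 0) ≤ Fintype.card F - 1 :=
      mutCard_ne m₁ n₁ hm₁ hn₁ hne 1 0 one_ne_zero
    have h2 : mutCard m₁ n₁ ((1:F), 0) = Fintype.card F := by
      rw [mutCard_map m₁ n₁ m₂ m₂ φ hiso, mutCard_diag]
    omega
  intro x y
  have key := mutCard_map m₁ n₁ m₂ n₂ φ hiso (x, y)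
  have h1 := mutCard_eq_card_iff (F := F) m₁ n₁ hm₁ hn₁ hne (x, y)
  have h2 := mutCard_eq_card_iff (F := F) m₂ n₂ hm₂ hn₂ hm2n2 (φ (x, y))
  have hfst : (φ (x, y)).1 = f (x, y) := by rw [hφ]
  rw [key, h2, hfst] at h1
  exact h1
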